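/- Let m ≤ p be positive integers. The space of pairs (X, Y) of complex matrices, with X of size m×p and Y of size p×m, satisfying T_m·S_m·Yᵀ = −X·T_p·S_p and Yᵀ·S_p·T_p = −S_m·T_m·X, is a ℂ-vector space of dimension 2m. -/

import Mathlib

open Matrix

noncomputable section

open scoped Classical

/-- The `m × m` upper-triangular Jordan block `J_{λ,m}` with eigenvalue `λ`. -/
def Jb (l : ℂ) (m : ℕ) : Matrix (Fin m) (Fin m) ℂ :=
  Matrix.of fun i j =>
    if (j : ℕ) = (i : ℕ) then l else if (j : ℕ) = (i : ℕ) + 1 then 1 else 0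

/-- The `m × m` anti-diagonal matrix `S_m` ( `(i,j)` entry is `1` iff `i + j = m + 1`,
1-based). -/
def Sb (m : ℕ) : Matrix (Fin m) (Fin m) ℂ :=
  Matrix.of fun i j => if (i : ℕ) + (j : ℕ) + 1 = m then 1 else 0

/-- The size `s(λ,m)` of the matrix `M_{λ,m}`: `m` if `λ ∈ ℝ`, and `2m` otherwise. -/
def sz (l : ℂ) (m : ℕ) : ℕ := if l.im = 0 then m else 2 * m

/-- The matrix `M_{λ,m}`: the Jordan block `J_{λ,m}` if `λ ∈ ℝ`, and the block matrix
`[[0, J_{λ²,m}], [I, 0]]` otherwise. -/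
def Mb (l : ℂ) (m : ℕ) : Matrix (Fin (sz l m)) (Fin (sz l m)) ℂ :=
  Matrix.of fun i j =>
    if l.im = 0 then
      (if (j : ℕ) = (i : ℕ) then l else if (j : ℕ) = (i : ℕ) + 1 then 1 else 0)
    else if (i : ℕ) < m ∧ m ≤ (j : ℕ) then
      (if (j : ℕ) - m = (i : ℕ) then l ^ 2
       else if (j : ℕ) - m = (i : ℕ) + 1 then 1 else 0)
    else if m ≤ (i : ℕ) ∧ (i : ℕ) - m = (j : ℕ) then 1 else 0

/-- The matrix `N_{λ,m}`: `S_m` if `λ ∈ ℝ` and `S_{2m}` otherwise. -/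
def Nb (l : ℂ) (m : ℕ) : Matrix (Fin (sz l m)) (Fin (sz l m)) ℂ := Sb (sz l m)

/-- A complex number is normalized if `Re λ ≥ 0` and, when `Re λ = 0`, also `Im λ ≥ 0`. -/
def Normalized (l : ℂ) : Prop := 0 ≤ l.re ∧ (l.re = 0 → 0 ≤ l.im)

/-- The linear map `B ↦ B * X + X * Bᵀ`. -/
def rmap {n : Type*} [Fintype n] (X : Matrix n n ℂ) :
    Matrix n n ℂ →ₗ[ℂ] Matrix n n ℂ where
  toFun B := B * X + X * Bᵀ
  map_add' B C := by
    simp only [Matrix.add_mul, Matrix.mul_add, Matrix.transpose_add]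
    abel
  map_smul' c B := by
    simp only [Matrix.smul_mul, Matrix.mul_smul, Matrix.transpose_smul, smul_add,
      RingHom.id_apply]

/-- The linear map `B ↦ Bᵀ * Y + Y * B`. -/
def lmap {n : Type*} [Fintype n] (Y : Matrix n n ℂ) :
    Matrix n n ℂ →ₗ[ℂ] Matrix n n ℂ where
  toFun B := Bᵀ * Y + Y * B
  map_add' B C := by
    simp only [Matrix.add_mul, Matrix.mul_add, Matrix.transpose_add]
    abel
  map_smul' c B := by
    simp only [Matrix.smul_mul, Matrix.mul_smul, Matrix.transpose_smul, smul_add,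
      RingHom.id_apply]

/-- The subspace `𝒜°` associated with `(H, A)`:  matrices `B` with
`B·A·H⁻¹ + A·H⁻¹·Bᵀ = 0` and `Bᵀ·H·conj(A) + H·conj(A)·B = 0`. -/
def scriptAo {n : Type*} [Fintype n] [DecidableEq n] (H A : Matrix n n ℂ) :
    Submodule ℂ (Matrix n n ℂ) :=
  LinearMap.ker (rmap (A * H⁻¹)) ⊓ LinearMap.ker (lmap (H * A.map (starRingEnd ℂ)))

/-- The subspace `𝒜` associated with `(H, A)`:  matrices `B` with
`B·A·H⁻¹ + A·H⁻¹·Bᵀ ∈ ℂ·(A·H⁻¹)` and `Bᵀ·H·conj(A) + H·conj(A)·B ∈ ℂ·(H·conj(A))`. -/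
def scriptA {n : Type*} [Fintype n] [DecidableEq n] (H A : Matrix n n ℂ) :
    Submodule ℂ (Matrix n n ℂ) :=
  Submodule.comap (rmap (A * H⁻¹)) (Submodule.span ℂ {A * H⁻¹}) ⊓
    Submodule.comap (lmap (H * A.map (starRingEnd ℂ)))
      (Submodule.span ℂ {H * A.map (starRingEnd ℂ)})

/-- The linear map whose kernel consists of the pairs `(X, Y)` with
`T_m·S_m·Yᵀ = −X·T_p·S_p` and `Yᵀ·S_p·T_p = −S_m·T_m·X`. -/
def pairMap (m p : ℕ) :
    (Matrix (Fin m) (Fin p) ℂ × Matrix (Fin p) (Fin m) ℂ) →ₗ[ℂ]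
      (Matrix (Fin m) (Fin p) ℂ × Matrix (Fin m) (Fin p) ℂ) where
  toFun Z := (Jb 0 m * Sb m * Z.2ᵀ + Z.1 * (Jb 0 p * Sb p),
    Z.2ᵀ * (Sb p * Jb 0 p) + Sb m * Jb 0 m * Z.1)
  map_add' Z W := by
    simp only [Prod.fst_add, Prod.snd_add, Matrix.transpose_add, Matrix.add_mul,
      Matrix.mul_add, Prod.mk_add_mk, Prod.mk.injEq]
    constructor <;> abel
  map_smul' c Z := by
    simp only [Prod.smul_fst, Prod.smul_snd, Matrix.transpose_smul, Matrix.smul_mul,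
      Matrix.mul_smul, Prod.smul_mk, smul_add, RingHom.id_apply]

lemma Jb_zero_apply {m : ℕ} (i k : Fin m) :
    Jb 0 m i k = if (k : ℕ) = (i : ℕ) + 1 then 1 else 0 := by
  simp only [Jb, Matrix.of_apply]
  split_ifs <;> first | rfl | omega

lemma Jb_mul_apply {m p : ℕ} (B : Matrix (Fin m) (Fin p) ℂ) (i : Fin m) (j : Fin p) :
    (Jb 0 m * B) i j = if h : (i : ℕ) + 1 < m then B ⟨(i : ℕ) + 1, h⟩ j else 0 := by
  rw [Matrix.mul_apply]
  simp only [Jb_zero_apply, ite_mul, one_mul, zero_mul]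
  by_cases h : (i : ℕ) + 1 < m
  · rw [dif_pos h, Finset.sum_eq_single (⟨(i : ℕ) + 1, h⟩ : Fin m)]
    · rw [if_pos rfl]
    · intro k _ hk
      rw [if_neg fun hh => hk (Fin.ext hh)]
    · intro hmem; exact absurd (Finset.mem_univ _) hmem
  · rw [dif_neg h]
    apply Finset.sum_eq_zero
    intro k _
    rw [if_neg (by omega)]

lemma mul_Jb_apply {m p : ℕ} (B : Matrix (Fin m) (Fin p) ℂ) (i : Fin m) (j : Fin p) :
    (B * Jb 0 p) i j = if h : 0 < (j : ℕ) then B i ⟨(j : ℕ) - 1, by omega⟩ else 0 := by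
  rw [Matrix.mul_apply]
  simp only [Jb_zero_apply, mul_ite, mul_one, mul_zero]
  by_cases h : 0 < (j : ℕ)
  · rw [dif_pos h, Finset.sum_eq_single (⟨(j : ℕ) - 1, by omega⟩ : Fin p)]
    · rw [if_pos (by simp only [Fin.val_mk]; omega)]
    · intro k _ hk
      rw [if_neg fun hh => hk (Fin.ext (by simp only [Fin.val_mk]; omega))]
    · intro hmem; exact absurd (Finset.mem_univ _) hmem
  · rw [dif_neg h]
    apply Finset.sum_eq_zero
    intro k _
    rw [if_neg (by omega)]

lemma Sb_mul_apply {n p : ℕ} (B : Matrix (Fin n) (Fin p) ℂ) (i : Fin n) (j : Fin p) :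
    (Sb n * B) i j = B ⟨n - 1 - (i : ℕ), by omega⟩ j := by
  rw [Matrix.mul_apply]
  rw [Finset.sum_eq_single (⟨n - 1 - (i : ℕ), by omega⟩ : Fin n)]
  · rw [show Sb n i ⟨n - 1 - (i : ℕ), by omega⟩ = 1 by
      simp only [Sb, Matrix.of_apply, Fin.val_mk]; rw [if_pos (by omega)], one_mul]
  · intro k _ hk
    rw [show Sb n i k = 0 by
      simp only [Sb, Matrix.of_apply]
      rw [if_neg fun hh => hk (Fin.ext (by simp only [Fin.val_mk]; omega))], zero_mul]
  · intro hmem; exact absurd (Finset.mem_univ _) hmem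

lemma mul_Sb_apply {n p : ℕ} (B : Matrix (Fin p) (Fin n) ℂ) (i : Fin p) (j : Fin n) :
    (B * Sb n) i j = B i ⟨n - 1 - (j : ℕ), by omega⟩ := by
  rw [Matrix.mul_apply]
  rw [Finset.sum_eq_single (⟨n - 1 - (j : ℕ), by omega⟩ : Fin n)]
  · rw [show Sb n ⟨n - 1 - (j : ℕ), by omega⟩ j = 1 by
      simp only [Sb, Matrix.of_apply, Fin.val_mk]; rw [if_pos (by omega)], mul_one]
  · intro k _ hk
    rw [show Sb n k j = 0 by
      simp only [Sb, Matrix.of_apply]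
      rw [if_neg fun hh => hk (Fin.ext (by simp only [Fin.val_mk]; omega))], mul_zero]
  · intro hmem; exact absurd (Finset.mem_univ _) hmem

lemma Sb_mul_Sb (n : ℕ) : Sb n * Sb n = 1 := by
  ext i j
  rw [Sb_mul_apply]
  have hi := i.isLt
  have hj := j.isLt
  rw [Matrix.one_apply]
  simp only [Sb, Matrix.of_apply]
  by_cases h : i = j
  · subst h; rw [if_pos (by omega), if_pos rfl]
  · rw [if_neg (fun hh => h (Fin.ext (by omega))), if_neg h]

lemma Sb_transpose (n : ℕ) : (Sb n)ᵀ = Sb n := by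
  ext i j
  simp only [Matrix.transpose_apply, Sb, Matrix.of_apply]
  rw [Nat.add_comm (j : ℕ) (i : ℕ)]

/-- Sylvester-type map. -/
noncomputable def sylv (m p : ℕ) (c : ℂ) :
    Matrix (Fin m) (Fin p) ℂ →ₗ[ℂ] Matrix (Fin m) (Fin p) ℂ where
  toFun B := Jb 0 m * B + c • (B * Jb 0 p)
  map_add' B C := by
    simp only [Matrix.mul_add, Matrix.add_mul, smul_add]
    abel
  map_smul' a B := by
    simp only [Matrix.mul_smul, Matrix.smul_mul, RingHom.id_apply, smul_add, smul_comm c a]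

/-- Entries of a rectangular matrix, extended by zero. -/
def ent {m p : ℕ} (B : Matrix (Fin m) (Fin p) ℂ) (i j : ℕ) : ℂ :=
  if h : i < m ∧ j < p then B ⟨i, h.1⟩ ⟨j, h.2⟩ else 0

lemma ent_of_lt {m p : ℕ} (B : Matrix (Fin m) (Fin p) ℂ) {i j : ℕ} (hi : i < m) (hj : j < p) :
    ent B i j = B ⟨i, hi⟩ ⟨j, hj⟩ := dif_pos ⟨hi, hj⟩

lemma sylv_ker_rec {m p : ℕ} {c : ℂ} {B : Matrix (Fin m) (Fin p) ℂ}
    (hB : sylv m p c B = 0) (i j : ℕ) (hj : j < p) :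
    ent B (i + 1) j + c * (if 0 < j then ent B i (j - 1) else 0) = 0 := by
  by_cases hi : i < m
  · have h0 := congrFun (congrFun hB ⟨i, hi⟩) ⟨j, hj⟩
    simp only [sylv, LinearMap.coe_mk, AddHom.coe_mk, Matrix.add_apply, Matrix.smul_apply,
      Matrix.zero_apply, smul_eq_mul, Jb_mul_apply, mul_Jb_apply] at h0
    have e1 : ent B (i + 1) j = if h : i + 1 < m then B ⟨i + 1, h⟩ ⟨j, hj⟩ else 0 := by
      by_cases h1 : i + 1 < m
      · rw [dif_pos h1]; exact ent_of_lt B h1 hj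
      · rw [dif_neg h1, ent, dif_neg (by omega)]
    have e2 : (if 0 < j then ent B i (j - 1) else 0)
        = if h : 0 < j then B ⟨i, hi⟩ ⟨j - 1, by omega⟩ else 0 := by
      by_cases h2 : 0 < j
      · rw [if_pos h2, dif_pos h2]; exact ent_of_lt B hi (by omega)
      · rw [if_neg h2, dif_neg h2]
    rw [e1, e2]
    exact h0
  · rw [ent, dif_neg (by omega)]
    rw [show (if 0 < j then ent B i (j-1) else 0) = 0 by
      split
      · rw [ent, dif_neg (by omega)]
      · rfl]
    ring

lemma sylv_ker_col0 {m p : ℕ} {c : ℂ} {B : Matrix (Fin m) (Fin p) ℂ}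
    (hB : sylv m p c B = 0) (hp : 0 < p) (i : ℕ) (hi : 1 ≤ i) : ent B i 0 = 0 := by
  have := sylv_ker_rec hB (i - 1) 0 hp
  rw [if_neg (by omega)] at this
  have h2 : i - 1 + 1 = i := by omega
  rw [h2] at this
  simpa using this

lemma sylv_ker_diag {m p : ℕ} {c : ℂ} {B : Matrix (Fin m) (Fin p) ℂ}
    (hB : sylv m p c B = 0) (k i j : ℕ) (hjk : j + k < p) :
    ent B (i + k) (j + k) = (-c) ^ k * ent B i j := by
  induction k with
  | zero => simp
  | succ k ih =>
    have hrec := sylv_ker_rec hB (i + k) (j + k + 1) (by omega)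
    rw [if_pos (by omega)] at hrec
    have h1 : j + k + 1 - 1 = j + k := by omega
    rw [h1] at hrec
    have h2 : ent B (i + (k+1)) (j + (k+1)) = ent B (i + k + 1) (j + k + 1) := by
      congr 1 <;> omega
    rw [h2, show ent B (i+k+1) (j+k+1) = -c * ent B (i+k) (j+k) by linear_combination hrec,
      ih (by omega)]
    ring

lemma sylv_ker_lastrow {m p : ℕ} {c : ℂ} {B : Matrix (Fin m) (Fin p) ℂ}
    (hB : sylv m p c B = 0) (hc : c ≠ 0) (hm : 0 < m) (j : ℕ) (hj : j + 1 < p) :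
    ent B (m - 1) j = 0 := by
  have := sylv_ker_rec hB (m - 1) (j + 1) hj
  rw [if_pos (by omega)] at this
  have h1 : j + 1 - 1 = j := by omega
  have h2 : ent B (m - 1 + 1) (j + 1) = 0 := by
    rw [ent, dif_neg (by omega)]
  rw [h1, h2, zero_add] at this
  exact (mul_eq_zero.mp this).resolve_left hc

lemma sylv_ker_zero {m p : ℕ} {c : ℂ} {B : Matrix (Fin m) (Fin p) ℂ}
    (hB : sylv m p c B = 0) (hc : c ≠ 0) (hm : 0 < m) (hmp : m ≤ p)
    (htail : ∀ j : ℕ, p - m ≤ j → j < p → ent B 0 j = 0) : B = 0 := by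
  have hzero : ∀ d : ℕ, d < p → ent B 0 d = 0 := by
    intro d hd
    by_cases hdm : p - m ≤ d
    · exact htail d hdm hd
    · have hdiag := sylv_ker_diag hB (m - 1) 0 d (by omega)
      have hlast : ent B (0 + (m - 1)) (d + (m - 1)) = 0 := by
        rw [show (0 : ℕ) + (m - 1) = m - 1 by omega]
        exact sylv_ker_lastrow hB hc hm (d + (m - 1)) (by omega)
      rw [hlast] at hdiag
      have hpow : (-c) ^ (m - 1) ≠ 0 := pow_ne_zero _ (neg_ne_zero.mpr hc)
      exact ((mul_eq_zero.mp hdiag.symm).resolve_left hpow)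
  ext i j
  rw [Matrix.zero_apply, ← ent_of_lt B i.isLt j.isLt]
  rcases le_or_gt (i : ℕ) (j : ℕ) with hij | hij
  · have hdiag := sylv_ker_diag hB (i : ℕ) 0 ((j : ℕ) - (i : ℕ)) (by omega)
    rw [show (0 : ℕ) + (i : ℕ) = (i : ℕ) by omega,
      show (j : ℕ) - (i : ℕ) + (i : ℕ) = (j : ℕ) by omega] at hdiag
    rw [hdiag, hzero _ (by omega)]
    ring
  · have hdiag := sylv_ker_diag hB (j : ℕ) ((i : ℕ) - (j : ℕ)) 0 (by omega)
    rw [show (i : ℕ) - (j : ℕ) + (j : ℕ) = (i : ℕ) by omega,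
      show (0 : ℕ) + (j : ℕ) = (j : ℕ) by omega] at hdiag
    rw [hdiag, sylv_ker_col0 hB (by omega) _ (by omega)]
    ring

/-- A vector `Fin m → ℂ` extended by zero to `ℕ → ℂ`. -/
def vv {m : ℕ} (v : Fin m → ℂ) (d : ℕ) : ℂ := if h : d < m then v ⟨d, h⟩ else 0

/-- Explicit solutions of the Sylvester equation. -/
noncomputable def psi (m p : ℕ) (c : ℂ) :
    (Fin m → ℂ) →ₗ[ℂ] Matrix (Fin m) (Fin p) ℂ where
  toFun v := Matrix.of fun i j =>
    if (i : ℕ) + (p - m) ≤ (j : ℕ) then (-c) ^ (i : ℕ) * vv v ((j : ℕ) - (i : ℕ) - (p - m))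
    else 0
  map_add' v w := by
    ext i j
    simp only [Matrix.of_apply, Matrix.add_apply, vv]
    split
    · split
      · simp only [Pi.add_apply]; ring
      · ring
    · ring
  map_smul' a v := by
    ext i j
    simp only [Matrix.of_apply, Matrix.smul_apply, RingHom.id_apply, vv, smul_eq_mul]
    split
    · split
      · simp only [Pi.smul_apply, smul_eq_mul]; ring
      · ring
    · ring

lemma psi_apply (m p : ℕ) (c : ℂ) (v : Fin m → ℂ) (i : Fin m) (j : Fin p) :
    psi m p c v i j =
      if (i : ℕ) + (p - m) ≤ (j : ℕ) then (-c) ^ (i : ℕ) * vv v ((j : ℕ) - (i : ℕ) - (p - m))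
      else 0 := rfl

lemma psi_mem_ker (m p : ℕ) (hmp : m ≤ p) (c : ℂ) (v : Fin m → ℂ) :
    sylv m p c (psi m p c v) = 0 := by
  ext i j
  have hi := i.isLt
  have hj := j.isLt
  simp only [sylv, LinearMap.coe_mk, AddHom.coe_mk, Matrix.add_apply, Matrix.smul_apply,
    Matrix.zero_apply, smul_eq_mul, Jb_mul_apply, mul_Jb_apply]
  by_cases h1 : (i : ℕ) + 1 < m
  · rw [dif_pos h1]
    by_cases h2 : 0 < (j : ℕ)
    · rw [dif_pos h2, psi_apply, psi_apply]
      simp only [Fin.val_mk]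
      by_cases h3 : (i : ℕ) + 1 + (p - m) ≤ (j : ℕ)
      · rw [if_pos h3, if_pos (by omega)]
        rw [show (j : ℕ) - 1 - (i : ℕ) - (p - m) = (j : ℕ) - ((i : ℕ) + 1) - (p - m) by omega]
        ring
      · rw [if_neg h3, if_neg (by omega)]
        ring
    · rw [dif_neg h2, psi_apply]
      simp only [Fin.val_mk]
      rw [if_neg (by omega)]
      ring
  · rw [dif_neg h1]
    by_cases h2 : 0 < (j : ℕ)
    · rw [dif_pos h2, psi_apply]
      simp only [Fin.val_mk]
      rw [if_neg (by omega)]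
      ring
    · rw [dif_neg h2]
      ring

/-- Reading off the distinguished coordinates. -/
noncomputable def theta (m p : ℕ) : Matrix (Fin m) (Fin p) ℂ →ₗ[ℂ] (Fin m → ℂ) where
  toFun B := fun t => if h : 0 < m ∧ p - m + (t : ℕ) < p then B ⟨0, h.1⟩ ⟨p - m + (t : ℕ), h.2⟩
    else 0
  map_add' B C := by
    funext t
    simp only [Pi.add_apply]
    split
    · simp [Matrix.add_apply]
    · simp
  map_smul' a B := by
    funext t
    simp only [RingHom.id_apply, Pi.smul_apply]
    split
    · simp [Matrix.smul_apply]
    · simp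

lemma theta_psi (m p : ℕ) (hm : 0 < m) (hmp : m ≤ p) (c : ℂ) (v : Fin m → ℂ) :
    theta m p (psi m p c v) = v := by
  funext t
  have ht := t.isLt
  simp only [theta, LinearMap.coe_mk, AddHom.coe_mk]
  rw [dif_pos ⟨hm, by omega⟩, psi_apply]
  simp only [Fin.val_mk]
  rw [if_pos (by omega)]
  rw [show p - m + (t : ℕ) - 0 - (p - m) = (t : ℕ) by omega]
  simp [vv, ht]

lemma psi_injective (m p : ℕ) (hm : 0 < m) (hmp : m ≤ p) (c : ℂ) :
    Function.Injective (psi m p c) := by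
  intro v w h
  have := congrArg (theta m p) h
  rwa [theta_psi m p hm hmp, theta_psi m p hm hmp] at this

lemma theta_ker_inj (m p : ℕ) (hm : 0 < m) (hmp : m ≤ p) (c : ℂ) (hc : c ≠ 0)
    {B : Matrix (Fin m) (Fin p) ℂ} (hB : sylv m p c B = 0) (h0 : theta m p B = 0) :
    B = 0 := by
  apply sylv_ker_zero hB hc hm hmp
  intro j hj1 hj2
  have ht := congrFun h0 ⟨j - (p - m), by omega⟩
  simp only [theta, LinearMap.coe_mk, AddHom.coe_mk, Pi.zero_apply] at ht
  rw [dif_pos ⟨hm, by omega⟩] at ht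
  rw [ent_of_lt B hm hj2]
  convert ht using 2
  apply Fin.ext
  show j = p - m + (j - (p - m))
  omega

lemma Sb_Sb_cancel {n q : ℕ} (M : Matrix (Fin n) (Fin q) ℂ) : Sb n * (Sb n * M) = M := by
  rw [← Matrix.mul_assoc, Sb_mul_Sb, Matrix.one_mul]

/-- The map `Z ↦ S_m Z.2ᵀ S_p`. -/
noncomputable def vmap (m p : ℕ) :
    (Matrix (Fin m) (Fin p) ℂ × Matrix (Fin p) (Fin m) ℂ) →ₗ[ℂ] Matrix (Fin m) (Fin p) ℂ where
  toFun Z := Sb m * Z.2ᵀ * Sb p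
  map_add' Z W := by
    simp only [Prod.snd_add, Matrix.transpose_add, Matrix.mul_add, Matrix.add_mul]
  map_smul' c Z := by
    simp only [Prod.smul_snd, Matrix.transpose_smul, Matrix.mul_smul, Matrix.smul_mul,
      RingHom.id_apply]

lemma mem_ker_pairMap_iff (m p : ℕ)
    (Z : Matrix (Fin m) (Fin p) ℂ × Matrix (Fin p) (Fin m) ℂ) :
    Z ∈ LinearMap.ker (pairMap m p) ↔
      sylv m p 1 (Z.1 + vmap m p Z) = 0 ∧ sylv m p (-1) (vmap m p Z - Z.1) = 0 := by
  have hU : Z.2ᵀ = Sb m * (vmap m p Z) * Sb p := by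
    simp only [vmap, LinearMap.coe_mk, AddHom.coe_mk]
    simp only [Matrix.mul_assoc, Sb_Sb_cancel, Sb_mul_Sb, Matrix.mul_one]
  set V := vmap m p Z with hV
  set X := Z.1 with hX
  have e1 : Jb 0 m * Sb m * Z.2ᵀ + Z.1 * (Jb 0 p * Sb p) = (Jb 0 m * V + X * Jb 0 p) * Sb p := by
    rw [hU]
    simp only [Matrix.mul_assoc, Matrix.add_mul, Sb_Sb_cancel, Sb_mul_Sb, Matrix.mul_one]
    rfl
  have e2 : Z.2ᵀ * (Sb p * Jb 0 p) + Sb m * Jb 0 m * Z.1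
      = Sb m * (V * Jb 0 p + Jb 0 m * X) := by
    rw [hU]
    simp only [Matrix.mul_assoc, Matrix.mul_add, Sb_Sb_cancel, Sb_mul_Sb, Matrix.mul_one]
    rfl
  have hker : Z ∈ LinearMap.ker (pairMap m p) ↔
      (Jb 0 m * V + X * Jb 0 p) * Sb p = 0 ∧ Sb m * (V * Jb 0 p + Jb 0 m * X) = 0 := by
    rw [LinearMap.mem_ker, show pairMap m p Z =
      ((Jb 0 m * V + X * Jb 0 p) * Sb p, Sb m * (V * Jb 0 p + Jb 0 m * X)) from by
        rw [show pairMap m p Z = (Jb 0 m * Sb m * Z.2ᵀ + Z.1 * (Jb 0 p * Sb p),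
          Z.2ᵀ * (Sb p * Jb 0 p) + Sb m * Jb 0 m * Z.1) from rfl, e1, e2],
      Prod.mk_eq_zero]
  have f1 : ∀ M : Matrix (Fin m) (Fin p) ℂ, M * Sb p = 0 ↔ M = 0 := by
    intro M
    constructor
    · intro h
      have := congrArg (· * Sb p) h
      simpa only [Matrix.mul_assoc, Sb_mul_Sb, Matrix.mul_one, Matrix.zero_mul] using this
    · intro h; rw [h, Matrix.zero_mul]
  have f2 : ∀ M : Matrix (Fin m) (Fin p) ℂ, Sb m * M = 0 ↔ M = 0 := by
    intro M
    constructor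
    · intro h
      have := congrArg (Sb m * ·) h
      simpa only [Sb_Sb_cancel, Matrix.mul_zero] using this
    · intro h; rw [h, Matrix.mul_zero]
  have g1 : sylv m p 1 (X + V)
      = Jb 0 m * V + X * Jb 0 p + (V * Jb 0 p + Jb 0 m * X) := by
    simp only [sylv, LinearMap.coe_mk, AddHom.coe_mk, one_smul, Matrix.mul_add,
      Matrix.add_mul]
    abel
  have g2 : sylv m p (-1) (V - X)
      = Jb 0 m * V + X * Jb 0 p - (V * Jb 0 p + Jb 0 m * X) := by
    simp only [sylv, LinearMap.coe_mk, AddHom.coe_mk, neg_smul, one_smul, Matrix.mul_sub,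
      Matrix.sub_mul]
    abel
  rw [hker, f1, f2, g1, g2]
  constructor
  · rintro ⟨h1, h2⟩
    rw [h1, h2]
    constructor <;> abel
  · rintro ⟨h1, h2⟩
    have hA1 : (Jb 0 m * V + X * Jb 0 p) + (Jb 0 m * V + X * Jb 0 p) = 0 := by
      calc (Jb 0 m * V + X * Jb 0 p) + (Jb 0 m * V + X * Jb 0 p)
          = (Jb 0 m * V + X * Jb 0 p + (V * Jb 0 p + Jb 0 m * X))
            + (Jb 0 m * V + X * Jb 0 p - (V * Jb 0 p + Jb 0 m * X)) := by abel
        _ = 0 := by rw [h1, h2, add_zero]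
    have hA2 : (V * Jb 0 p + Jb 0 m * X) + (V * Jb 0 p + Jb 0 m * X) = 0 := by
      calc (V * Jb 0 p + Jb 0 m * X) + (V * Jb 0 p + Jb 0 m * X)
          = (Jb 0 m * V + X * Jb 0 p + (V * Jb 0 p + Jb 0 m * X))
            - (Jb 0 m * V + X * Jb 0 p - (V * Jb 0 p + Jb 0 m * X)) := by abel
        _ = 0 := by rw [h1, h2, sub_zero]
    have t1 : (2 : ℂ) • (Jb 0 m * V + X * Jb 0 p) = 0 := by rw [two_smul]; exact hA1
    have t2 : (2 : ℂ) • (V * Jb 0 p + Jb 0 m * X) = 0 := by rw [two_smul]; exact hA2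
    exact ⟨(smul_eq_zero.mp t1).resolve_left two_ne_zero,
      (smul_eq_zero.mp t2).resolve_left two_ne_zero⟩

lemma vmap_apply (m p : ℕ) (Z : Matrix (Fin m) (Fin p) ℂ × Matrix (Fin p) (Fin m) ℂ) :
    vmap m p Z = Sb m * Z.2ᵀ * Sb p := rfl

/-- The map `M ↦ S_p Mᵀ S_m`. -/
noncomputable def wmap (m p : ℕ) :
    Matrix (Fin m) (Fin p) ℂ →ₗ[ℂ] Matrix (Fin p) (Fin m) ℂ where
  toFun M := Sb p * Mᵀ * Sb m
  map_add' M N := by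
    simp only [Matrix.transpose_add, Matrix.mul_add, Matrix.add_mul]
  map_smul' c M := by
    simp only [Matrix.transpose_smul, Matrix.mul_smul, Matrix.smul_mul, RingHom.id_apply]

/-- Parametrization of the kernel of `pairMap`. -/
noncomputable def psiPair (m p : ℕ) :
    ((Fin m → ℂ) × (Fin m → ℂ)) →ₗ[ℂ]
      (Matrix (Fin m) (Fin p) ℂ × Matrix (Fin p) (Fin m) ℂ) :=
  (((2 : ℂ)⁻¹) • ((psi m p 1).comp (LinearMap.fst ℂ _ _)
      - (psi m p (-1)).comp (LinearMap.snd ℂ _ _))).prod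
    (((2 : ℂ)⁻¹) • ((wmap m p).comp ((psi m p 1).comp (LinearMap.fst ℂ _ _)
      + (psi m p (-1)).comp (LinearMap.snd ℂ _ _))))

lemma psiPair_apply (m p : ℕ) (vw : (Fin m → ℂ) × (Fin m → ℂ)) :
    psiPair m p vw = (((2 : ℂ)⁻¹) • (psi m p 1 vw.1 - psi m p (-1) vw.2),
      ((2 : ℂ)⁻¹) • (Sb p * (psi m p 1 vw.1 + psi m p (-1) vw.2)ᵀ * Sb m)) := rfl

lemma psiPair_decomp (m p : ℕ) (vw : (Fin m → ℂ) × (Fin m → ℂ)) :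
    (psiPair m p vw).1 + vmap m p (psiPair m p vw) = psi m p 1 vw.1 ∧
      vmap m p (psiPair m p vw) - (psiPair m p vw).1 = psi m p (-1) vw.2 := by
  have hv : vmap m p (psiPair m p vw)
      = ((2 : ℂ)⁻¹) • (psi m p 1 vw.1 + psi m p (-1) vw.2) := by
    rw [vmap_apply, psiPair_apply]
    simp only [Matrix.transpose_smul, Matrix.transpose_mul, Matrix.transpose_transpose,
      Sb_transpose, Matrix.smul_mul, Matrix.mul_smul, Matrix.mul_assoc, Sb_Sb_cancel,
      Sb_mul_Sb, Matrix.mul_one]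
  have hx : (psiPair m p vw).1
      = ((2 : ℂ)⁻¹) • (psi m p 1 vw.1 - psi m p (-1) vw.2) := by rw [psiPair_apply]
  rw [hv, hx]
  constructor
  · rw [← smul_add, show psi m p 1 vw.1 - psi m p (-1) vw.2
      + (psi m p 1 vw.1 + psi m p (-1) vw.2) = (2 : ℂ) • psi m p 1 vw.1 by
        rw [two_smul]; abel, smul_smul, inv_mul_cancel₀ two_ne_zero, one_smul]
  · rw [← smul_sub, show psi m p 1 vw.1 + psi m p (-1) vw.2
      - (psi m p 1 vw.1 - psi m p (-1) vw.2) = (2 : ℂ) • psi m p (-1) vw.2 by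
        rw [two_smul]; abel, smul_smul, inv_mul_cancel₀ two_ne_zero, one_smul]

/-- Coordinates on the kernel of `pairMap`. -/
noncomputable def thetaPair (m p : ℕ) :
    (Matrix (Fin m) (Fin p) ℂ × Matrix (Fin p) (Fin m) ℂ) →ₗ[ℂ]
      ((Fin m → ℂ) × (Fin m → ℂ)) :=
  ((theta m p).comp (LinearMap.fst ℂ _ _ + vmap m p)).prod
    ((theta m p).comp (vmap m p - LinearMap.fst ℂ _ _))

lemma thetaPair_psiPair (m p : ℕ) (hm : 0 < m) (hmp : m ≤ p)
    (vw : (Fin m → ℂ) × (Fin m → ℂ)) : thetaPair m p (psiPair m p vw) = vw := by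
  obtain ⟨h1, h2⟩ := psiPair_decomp m p vw
  have : thetaPair m p (psiPair m p vw)
      = (theta m p ((psiPair m p vw).1 + vmap m p (psiPair m p vw)),
         theta m p (vmap m p (psiPair m p vw) - (psiPair m p vw).1)) := by
    simp [thetaPair, LinearMap.prod_apply, LinearMap.comp_apply, LinearMap.add_apply,
      LinearMap.sub_apply, LinearMap.fst_apply]
  rw [this, h1, h2, theta_psi m p hm hmp, theta_psi m p hm hmp]

lemma psiPair_mem_ker (m p : ℕ) (hmp : m ≤ p) (vw : (Fin m → ℂ) × (Fin m → ℂ)) :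
    psiPair m p vw ∈ LinearMap.ker (pairMap m p) := by
  obtain ⟨h1, h2⟩ := psiPair_decomp m p vw
  rw [mem_ker_pairMap_iff, h1, h2]
  exact ⟨psi_mem_ker m p hmp 1 vw.1, psi_mem_ker m p hmp (-1) vw.2⟩

/-- For `m ≤ p` the space of pairs `(X, Y)` of complex matrices with
`T_m·S_m·Yᵀ = −X·T_p·S_p` and `Yᵀ·S_p·T_p = −S_m·T_m·X` has dimension `2m`. -/
theorem stmt5 (m p : ℕ) (hm : 0 < m) (hmp : m ≤ p) :
    Module.finrank ℂ ↥(LinearMap.ker (pairMap m p)) = 2 * m := by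
  have hdim : Module.finrank ℂ ((Fin m → ℂ) × (Fin m → ℂ)) = 2 * m := by
    rw [Module.finrank_prod, Module.finrank_fin_fun]
    omega
  apply le_antisymm
  · have hinj : Function.Injective
        ((thetaPair m p).comp (LinearMap.ker (pairMap m p)).subtype) := by
      rw [← LinearMap.ker_eq_bot, Submodule.eq_bot_iff]
      rintro ⟨Z, hZ⟩ hz0
      rw [LinearMap.mem_ker, LinearMap.comp_apply, Submodule.coe_subtype] at hz0
      rw [mem_ker_pairMap_iff] at hZ
      have ht : thetaPair m p Z
          = (theta m p (Z.1 + vmap m p Z), theta m p (vmap m p Z - Z.1)) := by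
        simp [thetaPair, LinearMap.prod_apply, LinearMap.comp_apply, LinearMap.add_apply,
          LinearMap.sub_apply, LinearMap.fst_apply]
      rw [ht, Prod.mk_eq_zero] at hz0
      have hP : Z.1 + vmap m p Z = 0 :=
        theta_ker_inj m p hm hmp 1 one_ne_zero hZ.1 hz0.1
      have hQ : vmap m p Z - Z.1 = 0 :=
        theta_ker_inj m p hm hmp (-1) (neg_ne_zero.mpr one_ne_zero) hZ.2 hz0.2
      have hX : Z.1 = 0 := by
        have h2 : (2 : ℂ) • Z.1 = 0 := by
          rw [two_smul]
          calc Z.1 + Z.1 = (Z.1 + vmap m p Z) - (vmap m p Z - Z.1) := by abel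
            _ = 0 := by rw [hP, hQ, sub_zero]
        exact (smul_eq_zero.mp h2).resolve_left two_ne_zero
      have hV : vmap m p Z = 0 := by
        have := hP
        rwa [hX, zero_add] at this
      have hY : Z.2 = 0 := by
        have hvz : Sb m * Z.2ᵀ * Sb p = 0 := hV
        have h1 := congrArg (fun M => Sb m * (M * Sb p)) hvz
        simp only [Matrix.zero_mul, Matrix.mul_zero] at h1
        rw [Matrix.mul_assoc, Matrix.mul_assoc, Sb_mul_Sb, Matrix.mul_one, Sb_Sb_cancel] at h1
        have := congrArg Matrix.transpose h1
        rwa [Matrix.transpose_transpose, Matrix.transpose_zero] at this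
      apply Subtype.ext
      show Z = 0
      rw [Prod.ext_iff]
      exact ⟨hX, hY⟩
    calc Module.finrank ℂ ↥(LinearMap.ker (pairMap m p))
        ≤ Module.finrank ℂ ((Fin m → ℂ) × (Fin m → ℂ)) :=
          LinearMap.finrank_le_finrank_of_injective hinj
      _ = 2 * m := hdim
  · have hinj : Function.Injective (psiPair m p) := by
      intro a b hab
      have := congrArg (thetaPair m p) hab
      rwa [thetaPair_psiPair m p hm hmp, thetaPair_psiPair m p hm hmp] at this
    have hle : LinearMap.range (psiPair m p) ≤ LinearMap.ker (pairMap m p) := by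
      rintro _ ⟨vw, rfl⟩
      exact psiPair_mem_ker m p hmp vw
    calc 2 * m = Module.finrank ℂ ((Fin m → ℂ) × (Fin m → ℂ)) := hdim.symm
      _ = Module.finrank ℂ ↥(LinearMap.range (psiPair m p)) :=
          (LinearMap.finrank_range_of_inj hinj).symm
      _ ≤ Module.finrank ℂ ↥(LinearMap.ker (pairMap m p)) := Submodule.finrank_mono hle
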